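/- The map λ ↦ M_TV(λ) is monotone nondecreasing on ℝ: for all λ₁ ≤ λ₂, sign(λ₁) · (1/2) ∫_ℝ |2 G(λ₁ ω(x)) − 1| f(x) dx ≤ sign(λ₂) · (1/2) ∫_ℝ |2 G(λ₂ ω(x)) − 1| f(x) dx. -/
import Mathlib


open MeasureTheory Real

/-- The perturbation measure λ ↦ M_TV(λ) is monotone
nondecreasing on ℝ. -/
theorem skew_symmetric_MTV_monotone
    (f G ω : ℝ → ℝ)
    (hf_meas : Measurable f) (hf_nonneg : ∀ x, 0 ≤ f x)
    (hf_int : Integrable f) (hf_one : ∫ x, f x = 1)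
    (hf_even : ∀ x, f (-x) = f x)
    (hG_meas : Measurable G) (hG_mono : Monotone G)
    (hG_range : ∀ t, G t ∈ Set.Icc (0 : ℝ) 1)
    (hG_symm : ∀ t, G (-t) = 1 - G t)
    (hG_zero : G 0 = 1 / 2)
    (hω_meas : Measurable ω)
    (hω_odd : ∀ x, ω (-x) = -ω x)
    (hω_nonneg : ∀ x, 0 ≤ x → 0 ≤ ω x) :
    ∀ l₁ l₂ : ℝ, l₁ ≤ l₂ →
      Real.sign l₁ * ((1 / 2) * ∫ x, |2 * G (l₁ * ω x) - 1| * f x)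
        ≤ Real.sign l₂ * ((1 / 2) * ∫ x, |2 * G (l₂ * ω x) - 1| * f x) := by
  intro l₁ l₂ hle
  -- evenness / monotonicity of t ↦ |2 G t − 1|
  have heven : ∀ s : ℝ, |2 * G s - 1| = 2 * G |s| - 1 := by
    intro s
    rcases le_or_gt 0 s with h | h
    · rw [abs_of_nonneg h]
      have h2 : (1:ℝ)/2 ≤ G s := by
        have := hG_mono h; rw [hG_zero] at this; exact this
      rw [abs_of_nonneg (by linarith)]
    · rw [abs_of_neg h]
      have hGs : G s = 1 - G (-s) := by
        have h1 := hG_symm (-s)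
        rw [neg_neg] at h1; linarith
      have h2 : (1:ℝ)/2 ≤ G (-s) := by
        have := hG_mono (by linarith : (0:ℝ) ≤ -s)
        rw [hG_zero] at this; exact this
      rw [hGs, abs_of_nonpos (by linarith)]; ring
  have habs : ∀ s t : ℝ, |s| ≤ |t| → |2 * G s - 1| ≤ |2 * G t - 1| := by
    intro s t h
    rw [heven s, heven t]
    have := hG_mono h; linarith
  -- integrability
  have hint : ∀ l : ℝ, Integrable (fun x => |2 * G (l * ω x) - 1| * f x) := by
    intro l
    apply hf_int.mono'
    · exact (((((hG_meas.comp (hω_meas.const_mul l)).const_mul 2).sub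
        measurable_const).abs).mul hf_meas).aestronglyMeasurable
    · filter_upwards with x
      rw [Real.norm_eq_abs, abs_of_nonneg (mul_nonneg (abs_nonneg _) (hf_nonneg x))]
      have h1 : |2 * G (l * ω x) - 1| ≤ 1 := by
        have := hG_range (l * ω x); rw [Set.mem_Icc] at this
        rw [abs_le]; constructor <;> linarith [this.1, this.2]
      calc |2 * G (l * ω x) - 1| * f x ≤ 1 * f x :=
            mul_le_mul_of_nonneg_right h1 (hf_nonneg x)
        _ = f x := one_mul _
  have hnn : ∀ l : ℝ, 0 ≤ ∫ x, |2 * G (l * ω x) - 1| * f x := fun l =>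
    integral_nonneg fun x => mul_nonneg (abs_nonneg _) (hf_nonneg x)
  have hmono : ∀ a b : ℝ, |a| ≤ |b| →
      (∫ x, |2 * G (a * ω x) - 1| * f x) ≤ ∫ x, |2 * G (b * ω x) - 1| * f x := by
    intro a b hab
    refine integral_mono (hint a) (hint b) fun x => ?_
    refine mul_le_mul_of_nonneg_right (habs _ _ ?_) (hf_nonneg x)
    rw [abs_mul, abs_mul]
    exact mul_le_mul_of_nonneg_right hab (abs_nonneg _)
  rcases lt_trichotomy l₁ 0 with h1 | h1 | h1
  · rw [Real.sign_of_neg h1]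
    rcases lt_trichotomy l₂ 0 with h2 | h2 | h2
    · rw [Real.sign_of_neg h2]
      have h := hmono l₂ l₁ (by rw [abs_of_neg h1, abs_of_neg h2]; linarith)
      nlinarith [hnn l₁, hnn l₂]
    · rw [h2, Real.sign_zero]
      nlinarith [hnn l₁]
    · rw [Real.sign_of_pos h2]
      nlinarith [hnn l₁, hnn l₂]
  · rw [h1, Real.sign_zero]
    rcases lt_trichotomy l₂ 0 with h2 | h2 | h2
    · linarith
    · rw [h2, Real.sign_zero]
    · rw [Real.sign_of_pos h2]
      nlinarith [hnn l₂]
  · have h2 : 0 < l₂ := lt_of_lt_of_le h1 hle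
    rw [Real.sign_of_pos h1, Real.sign_of_pos h2]
    have h := hmono l₁ l₂ (by rw [abs_of_pos h1, abs_of_pos h2]; linarith)
    linarith
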